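/- Let m ≥ 4 be an integer, let v_1, …, v_m be real numbers with 0 < v_1 < v_2 < ⋯ < v_m, let A_1, …, A_m be nonnegative real numbers, and let D_1, …, D_{m−1} be real numbers such that D_ℓ ≤ S_{ℓ+1} for every ℓ ∈ [1, m−1] and Σ_{ℓ=h}^{m−1} D_ℓ ≤ S_h for every h ∈ [1, m−1]. Then Σ_{h=1}^{m−1} v_h D_h ≤ c_m* · Σ_{h=1}^{m} v_h A_h. -/

import Mathlib

/-- `csum v i = ∑_{j=1}^{i-1} 2^{j-1} v_{i-j}` (empty sum is 0). -/
noncomputable def csum (v : ℕ → ℝ) (i : ℕ) : ℝ :=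
  ∑ j ∈ Finset.Icc 1 (i - 1), (2 : ℝ) ^ (j - 1) * v (i - j)

/-- `cval v i = c_i = (v_i + csum v i) / (v_{i+1} + csum v i)`. -/
noncomputable def cval (v : ℕ → ℝ) (i : ℕ) : ℝ :=
  (v i + csum v i) / (v (i + 1) + csum v i)

/-- `cstar v m = c_m^* = max_{1 ≤ i ≤ m-1} c_i`. -/
noncomputable def cstar (v : ℕ → ℝ) (m : ℕ) : ℝ :=
  if hne : (Finset.Icc 1 (m - 1)).Nonempty then (Finset.Icc 1 (m - 1)).sup' hne (cval v)
  else 0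

/-- `Sfun A m h = S_h = ∑_{ℓ=h}^{m} A_ℓ`. -/
noncomputable def Sfun (A : ℕ → ℝ) (m h : ℕ) : ℝ := ∑ ℓ ∈ Finset.Icc h m, A ℓ

/-- Multiplier `λ_i = (1 - c) (v_i + csum_i)`. -/
noncomputable def lamf (v : ℕ → ℝ) (m i : ℕ) : ℝ := (1 - cstar v m) * (v i + csum v i)

/-- Cumulative multiplier `M_i = v_i - λ_i` (with `M_0 = 0`). -/
noncomputable def Mff (v : ℕ → ℝ) (m i : ℕ) : ℝ := if i = 0 then 0 else v i - lamf v m i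

/-- Multiplier `μ_i = M_i - M_{i-1}`. -/
noncomputable def muf (v : ℕ → ℝ) (m i : ℕ) : ℝ := Mff v m i - Mff v m (i - 1)

lemma csum_range (v : ℕ → ℝ) (n : ℕ) :
    csum v (n + 1) = ∑ k ∈ Finset.range n, (2 : ℝ) ^ k * v (n - k) := by
  unfold csum
  rw [show n + 1 - 1 = n from rfl, ← Finset.Ico_add_one_right_eq_Icc, Finset.sum_Ico_eq_sum_range]
  apply Finset.sum_congr rfl
  intro i _
  congr 2 <;> omega

lemma csum_succ (v : ℕ → ℝ) (n : ℕ) (hn : 1 ≤ n) :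
    csum v (n + 1) = v n + 2 * csum v n := by
  obtain ⟨p, rfl⟩ : ∃ p, n = p + 1 := ⟨n - 1, by omega⟩
  rw [csum_range, csum_range, Finset.sum_range_succ']
  have : ∀ k ∈ Finset.range p, (2:ℝ) ^ (k+1) * v (p + 1 - (k+1)) = 2 * ((2:ℝ)^k * v (p - k)) := by
    intro k _
    rw [show p + 1 - (k + 1) = p - k from by omega]
    ring
  rw [Finset.sum_congr rfl this, ← Finset.mul_sum]
  simp; ring

lemma csum_one (v : ℕ → ℝ) : csum v 1 = 0 := by
  simp [csum]

/-- Splitting off the first term of a sum over `Icc`. -/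
lemma sum_Icc_split (f : ℕ → ℝ) (a b : ℕ) (hab : a ≤ b) :
    ∑ ℓ ∈ Finset.Icc a b, f ℓ = f a + ∑ ℓ ∈ Finset.Icc (a + 1) b, f ℓ := by
  rw [Finset.Icc_eq_cons_Ioc hab, Finset.sum_cons, ← Finset.Icc_add_one_left_eq_Ioc]

/-- Let `m ≥ 4`, let `0 < v 1 < ⋯ < v m`, let `A_1, …, A_m` be nonnegative reals, and
let `D_1, …, D_{m-1}` be reals with `D_ℓ ≤ S_{ℓ+1}` for every `ℓ ∈ [1, m-1]` and
`∑_{ℓ=h}^{m-1} D_ℓ ≤ S_h` for every `h ∈ [1, m-1]`. Then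
`∑_{h=1}^{m-1} v_h D_h ≤ c_m^* ∑_{h=1}^{m} v_h A_h`. -/
theorem stmt8 (m : ℕ) (hm : 4 ≤ m) (v : ℕ → ℝ)
    (hv1 : 0 < v 1) (hv : ∀ i, 1 ≤ i → i < m → v i < v (i + 1))
    (A : ℕ → ℝ) (hA : ∀ i ∈ Finset.Icc 1 m, 0 ≤ A i) (D : ℕ → ℝ)
    (hD1 : ∀ ℓ ∈ Finset.Icc 1 (m - 1), D ℓ ≤ Sfun A m (ℓ + 1))
    (hD2 : ∀ h ∈ Finset.Icc 1 (m - 1), ∑ ℓ ∈ Finset.Icc h (m - 1), D ℓ ≤ Sfun A m h) :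
    ∑ h ∈ Finset.Icc 1 (m - 1), v h * D h ≤
      cstar v m * ∑ h ∈ Finset.Icc 1 m, v h * A h := by
  set c := cstar v m with hcdef
  -- monotonicity and positivity of v
  have mono : ∀ d i, 1 ≤ i → i + d ≤ m → v i ≤ v (i + d) := by
    intro d
    induction d with
    | zero => intro i _ _; simp
    | succ d ih =>
      intro i hi hle
      have h1 : v i ≤ v (i + d) := ih i hi (by omega)
      have h2 : v (i + d) < v (i + d + 1) := hv (i + d) (by omega) (by omega)
      have : i + (d + 1) = i + d + 1 := by omega
      rw [this]; linarith
  have hvpos : ∀ i, 1 ≤ i → i ≤ m → 0 < v i := by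
    intro i h1 h2
    have := mono (i - 1) 1 le_rfl (by omega)
    rw [show 1 + (i - 1) = i from by omega] at this
    linarith
  have csum_nonneg : ∀ i, i ≤ m → 0 ≤ csum v i := by
    intro i him
    apply Finset.sum_nonneg
    intro j hj
    rw [Finset.mem_Icc] at hj
    have : 0 < v (i - j) := hvpos _ (by omega) (by omega)
    have : 0 < (2:ℝ) ^ (j - 1) := by positivity
    nlinarith
  have hne : (Finset.Icc 1 (m - 1)).Nonempty := ⟨1, by rw [Finset.mem_Icc]; omega⟩
  have hcs : c = (Finset.Icc 1 (m - 1)).sup' hne (cval v) := by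
    rw [hcdef, cstar, dif_pos hne]
  have hden : ∀ i, 1 ≤ i → i ≤ m - 1 → 0 < v (i + 1) + csum v i := by
    intro i h1 h2
    have := hvpos (i + 1) (by omega) (by omega)
    have := csum_nonneg i (by omega)
    linarith
  have hc_ge : ∀ i, 1 ≤ i → i ≤ m - 1 → cval v i ≤ c := by
    intro i h1 h2
    rw [hcs]
    exact Finset.le_sup' (cval v) (Finset.mem_Icc.mpr ⟨h1, h2⟩)
  have hckey : ∀ i, 1 ≤ i → i ≤ m - 1 → v i + csum v i ≤ c * (v (i + 1) + csum v i) := by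
    intro i h1 h2
    have := hc_ge i h1 h2
    rw [cval, div_le_iff₀ (hden i h1 h2)] at this
    linarith
  have hc1 : c < 1 := by
    rw [hcs]
    rw [Finset.sup'_lt_iff]
    intro i hi
    rw [Finset.mem_Icc] at hi
    rw [cval, div_lt_one (hden i hi.1 hi.2)]
    have := hv i hi.1 (by omega)
    linarith
  have hc0 : 0 ≤ c := by
    have h1 : cval v 1 ≤ c := hc_ge 1 le_rfl (by omega)
    have h2 : 0 ≤ cval v 1 := by
      rw [cval]
      apply div_nonneg
      · have := csum_nonneg 1 (by omega); linarith
      · have := hden 1 le_rfl (by omega); linarith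
    linarith
  -- basic facts about multipliers
  have hMf : ∀ i, 1 ≤ i → Mff v m i = v i - lamf v m i := by
    intro i hi; rw [Mff, if_neg (by omega)]
  have hMf0 : Mff v m 0 = 0 := by rw [Mff, if_pos rfl]
  have hlam_nonneg : ∀ i, 1 ≤ i → i ≤ m - 1 → 0 ≤ lamf v m i := by
    intro i h1 h2
    rw [lamf, ← hcdef]
    have hv' := hvpos i h1 (by omega)
    have hcn := csum_nonneg i (by omega)
    nlinarith
  have hmu_nonneg : ∀ i, 1 ≤ i → i ≤ m - 1 → 0 ≤ muf v m i := by
    intro i h1 h2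
    rcases Nat.eq_or_lt_of_le h1 with h | h
    · rw [muf, ← h]
      norm_num
      rw [hMf0, hMf 1 le_rfl, lamf, csum_one, ← hcdef]
      nlinarith
    · obtain ⟨j, rfl⟩ : ∃ j, i = j + 2 := ⟨i - 2, by omega⟩
      rw [muf, show j + 2 - 1 = j + 1 from rfl, hMf _ (by omega), hMf _ (by omega),
        lamf, lamf, ← hcdef]
      have hsucc : csum v (j + 2) = v (j + 1) + 2 * csum v (j + 1) := csum_succ v (j + 1) (by omega)
      have hkey := hckey (j + 1) (by omega) (by omega)
      rw [hsucc]
      nlinarith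
  -- claim 1: bounding ∑ v D by the multiplier expression
  have claim1 : ∀ k, k ≤ m - 1 →
      ∑ ℓ ∈ Finset.Icc (m - k) (m - 1), v ℓ * D ℓ ≤
        (∑ ℓ ∈ Finset.Icc (m - k) (m - 1),
          (lamf v m ℓ * Sfun A m (ℓ + 1) + muf v m ℓ * Sfun A m ℓ))
        + Mff v m (m - k - 1) * ∑ ℓ ∈ Finset.Icc (m - k) (m - 1), D ℓ := by
    intro k
    induction k with
    | zero =>
      intro _
      rw [Nat.sub_zero, Finset.Icc_eq_empty (by omega)]
      simp
    | succ k ih =>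
      intro hk
      have hIH := ih (by omega)
      obtain ⟨h, hh1, hh2, hh3, hh4⟩ :
          ∃ h, 1 ≤ h ∧ h ≤ m - 1 ∧ m - (k + 1) = h ∧ m - k = h + 1 := by
        exact ⟨m - (k + 1), by omega, by omega, rfl, by omega⟩
      rw [hh4] at hIH
      simp only [Nat.add_sub_cancel] at hIH
      rw [hh3]
      rw [sum_Icc_split (fun ℓ => v ℓ * D ℓ) h (m - 1) hh2,
        sum_Icc_split (fun ℓ => lamf v m ℓ * Sfun A m (ℓ + 1) + muf v m ℓ * Sfun A m ℓ) h (m - 1) hh2,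
        sum_Icc_split D h (m - 1) hh2]
      have hDh : D h ≤ Sfun A m (h + 1) := hD1 h (Finset.mem_Icc.mpr ⟨hh1, hh2⟩)
      have hTh : D h + ∑ ℓ ∈ Finset.Icc (h + 1) (m - 1), D ℓ ≤ Sfun A m h := by
        have := hD2 h (Finset.mem_Icc.mpr ⟨hh1, hh2⟩)
        rwa [sum_Icc_split D h (m - 1) hh2] at this
      have hlam := hlam_nonneg h hh1 hh2
      have hmu := hmu_nonneg h hh1 hh2
      have e1 : lamf v m h * D h ≤ lamf v m h * Sfun A m (h + 1) :=
        mul_le_mul_of_nonneg_left hDh hlam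
      have e2 : muf v m h * (D h + ∑ ℓ ∈ Finset.Icc (h + 1) (m - 1), D ℓ) ≤
          muf v m h * Sfun A m h := mul_le_mul_of_nonneg_left hTh hmu
      have e3 : v h * D h = lamf v m h * D h + Mff v m h * D h := by
        rw [hMf h hh1]; ring
      have e4 : Mff v m h * D h + Mff v m h * (∑ ℓ ∈ Finset.Icc (h + 1) (m - 1), D ℓ) =
          Mff v m (h - 1) * (D h + ∑ ℓ ∈ Finset.Icc (h + 1) (m - 1), D ℓ)
          + muf v m h * (D h + ∑ ℓ ∈ Finset.Icc (h + 1) (m - 1), D ℓ) := by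
        rw [muf]; ring
      linarith
  -- claim 2: bounding the multiplier expression by c ∑ v A
  have claim2 : ∀ k, k ≤ m - 1 →
      (∑ ℓ ∈ Finset.Icc (m - k) (m - 1),
        (lamf v m ℓ * Sfun A m (ℓ + 1) + muf v m ℓ * Sfun A m ℓ))
      + ((1 - c) * csum v (m - k) + Mff v m (m - k - 1)) * Sfun A m (m - k)
      ≤ c * ∑ ℓ ∈ Finset.Icc (m - k) m, v ℓ * A ℓ := by
    intro k
    induction k with
    | zero =>
      intro _
      rw [Nat.sub_zero, Finset.Icc_eq_empty (show ¬ (m ≤ m - 1) by omega), Finset.Icc_self,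
        Finset.sum_singleton, Finset.sum_empty]
      have hSm : Sfun A m m = A m := by rw [Sfun, Finset.Icc_self, Finset.sum_singleton]
      rw [hSm]
      have hcoef : (1 - c) * csum v m + Mff v m (m - 1) ≤ c * v m := by
        rw [hMf (m - 1) (by omega), lamf, ← hcdef]
        have hsucc : csum v m = v (m - 1) + 2 * csum v (m - 1) := by
          have := csum_succ v (m - 1) (by omega)
          rwa [show m - 1 + 1 = m from by omega] at this
        have hkey := hckey (m - 1) (by omega) le_rfl
        rw [show m - 1 + 1 = m from by omega] at hkey
        rw [hsucc]
        nlinarith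
      have hAm : 0 ≤ A m := hA m (Finset.mem_Icc.mpr ⟨by omega, le_rfl⟩)
      nlinarith
    | succ k ih =>
      intro hk
      have hIH := ih (by omega)
      obtain ⟨h, hh1, hh2, hh3, hh4⟩ :
          ∃ h, 1 ≤ h ∧ h ≤ m - 1 ∧ m - (k + 1) = h ∧ m - k = h + 1 := by
        exact ⟨m - (k + 1), by omega, by omega, rfl, by omega⟩
      rw [hh4] at hIH
      simp only [Nat.add_sub_cancel] at hIH
      rw [hh3]
      rw [sum_Icc_split (fun ℓ => lamf v m ℓ * Sfun A m (ℓ + 1) + muf v m ℓ * Sfun A m ℓ) h (m - 1) hh2,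
        sum_Icc_split (fun ℓ => v ℓ * A ℓ) h m (by omega)]
      have hSsplit : Sfun A m h = A h + Sfun A m (h + 1) := by
        rw [Sfun, Sfun, sum_Icc_split A h m (by omega)]
      have hsucc : csum v (h + 1) = v h + 2 * csum v h := csum_succ v h hh1
      have iden : lamf v m h * Sfun A m (h + 1) + muf v m h * Sfun A m h
          + ((1 - c) * csum v h + Mff v m (h - 1)) * Sfun A m h
          = c * (v h * A h) + ((1 - c) * csum v (h + 1) + Mff v m h) * Sfun A m (h + 1) := by
        rw [hSsplit, hsucc, muf, hMf h hh1, lamf, ← hcdef]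
        ring
      linarith
  -- combine
  have h1 := claim1 (m - 1) le_rfl
  have h2 := claim2 (m - 1) le_rfl
  rw [show m - (m - 1) = 1 from by omega] at h1 h2
  rw [show (1 : ℕ) - 1 = 0 from rfl, hMf0] at h1 h2
  rw [csum_one] at h2
  linarith
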